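/- In the region where a1 > u1 > a2 > u2 > a3 > u3 and with x_j = ε_j √(∏_k (a_j - u_k) / ∏_{k≠j} (a_j - a_k)) (ε_j = ±1 fixed), the Euclidean metric satisfies |dx|² = ∑_k [∏_{j≠k} (u_k - u_j) / (4 ∏_j (a_j - u_k))] (du_k)², i.e., for smooth curves u(t) with values in this region, |x'(t)|² = ∑_k [∏_{j≠k}(u_k - u_j)/(4∏_j(a_j - u_k))] (u_k'(t))². -/

import Mathlib

lemma elliptic_aux (a c e : ℝ) (hc : c ≠ 0) (he : e = 1 ∨ e = -1)
    (u1 u2 u3 : ℝ → ℝ) (d1 d2 d3 : ℝ) (t : ℝ)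
    (h1 : HasDerivAt u1 d1 t) (h2 : HasDerivAt u2 d2 t) (h3 : HasDerivAt u3 d3 t)
    (hpos : 0 < (a - u1 t) * (a - u2 t) * (a - u3 t) / c)
    (x : ℝ → ℝ)
    (hx : ∀ s, x s = e * Real.sqrt ((a - u1 s) * (a - u2 s) * (a - u3 s) / c)) :
    (deriv x t) ^ 2 =
      (d1 * ((a - u2 t) * (a - u3 t)) + d2 * ((a - u1 t) * (a - u3 t))
        + d3 * ((a - u1 t) * (a - u2 t))) ^ 2
        / (4 * c * ((a - u1 t) * (a - u2 t) * (a - u3 t))) := by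
  set P : ℝ := d1 * ((a - u2 t) * (a - u3 t)) + d2 * ((a - u1 t) * (a - u3 t))
        + d3 * ((a - u1 t) * (a - u2 t)) with hP
  have hg : HasDerivAt (fun s => (a - u1 s) * (a - u2 s) * (a - u3 s) / c) (-P / c) t := by
    have := (((h1.const_sub a).mul (h2.const_sub a)).mul (h3.const_sub a)).div_const c
    refine this.congr_deriv ?_
    simp only [Pi.mul_apply]; rw [hP]; ring
  have hN : (a - u1 t) * (a - u2 t) * (a - u3 t) / c ≠ 0 := ne_of_gt hpos
  have hNne : (a - u1 t) * (a - u2 t) * (a - u3 t) ≠ 0 := by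
    intro h; exact hN (by rw [h]; simp)
  have hs := hg.sqrt hN
  have hxf : x = fun s => e * Real.sqrt ((a - u1 s) * (a - u2 s) * (a - u3 s) / c) :=
    funext hx
  have hdx : HasDerivAt x
      (e * (-P / c / (2 * Real.sqrt ((a - u1 t) * (a - u2 t) * (a - u3 t) / c)))) t := by
    rw [hxf]; exact hs.const_mul e
  rw [hdx.deriv]
  have hsq : Real.sqrt ((a - u1 t) * (a - u2 t) * (a - u3 t) / c) ^ 2
      = (a - u1 t) * (a - u2 t) * (a - u3 t) / c := Real.sq_sqrt hpos.le
  have he2 : e ^ 2 = 1 := by rcases he with h | h <;> simp [h]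
  have step : (e * (-P / c / (2 * Real.sqrt ((a - u1 t) * (a - u2 t) * (a - u3 t) / c)))) ^ 2
      = e ^ 2 * (P ^ 2 / (4 * (c ^ 2 * Real.sqrt ((a - u1 t) * (a - u2 t) * (a - u3 t) / c) ^ 2))) := by
    ring
  rw [step, he2, hsq, one_mul]
  field_simp


lemma elliptic_quarter (P D d : ℝ) (hD : D ≠ 0) :
    P / (4 * D) * d ^ 2 = d ^ 2 / 4 * (P / D) := by
  field_simp

lemma elliptic_expand (c A1 A2 A3 d1 d2 d3 : ℝ) (hc : c ≠ 0)
    (h1 : A1 ≠ 0) (h2 : A2 ≠ 0) (h3 : A3 ≠ 0) :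
    (d1 * (A2 * A3) + d2 * (A1 * A3) + d3 * (A1 * A2)) ^ 2 / (4 * c * (A1 * A2 * A3)) =
      d1 ^ 2 / 4 * (A2 * A3 / (c * A1)) + d2 ^ 2 / 4 * (A1 * A3 / (c * A2))
        + d3 ^ 2 / 4 * (A1 * A2 / (c * A3))
        + d1 * d2 / 2 * (A3 / c) + d1 * d3 / 2 * (A2 / c) + d2 * d3 / 2 * (A1 / c) := by
  field_simp
  ring

lemma elliptic_lag (a1 a2 a3 v w r : ℝ)
    (h12 : a1 - a2 ≠ 0) (h13 : a1 - a3 ≠ 0) (h23 : a2 - a3 ≠ 0)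
    (g1 : a1 - v ≠ 0) (g2 : a2 - v ≠ 0) (g3 : a3 - v ≠ 0) :
    (a1 - w) * (a1 - r) / ((a1 - a2) * (a1 - a3) * (a1 - v))
      + (a2 - w) * (a2 - r) / ((a2 - a1) * (a2 - a3) * (a2 - v))
      + (a3 - w) * (a3 - r) / ((a3 - a1) * (a3 - a2) * (a3 - v))
      = (v - w) * (v - r) / ((a1 - v) * (a2 - v) * (a3 - v)) := by
  have h21 : a2 - a1 ≠ 0 := by intro h; apply h12; linarith
  have h31 : a3 - a1 ≠ 0 := by intro h; apply h13; linarith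
  have h32 : a3 - a2 ≠ 0 := by intro h; apply h23; linarith
  field_simp
  ring

lemma elliptic_cross (a1 a2 a3 r : ℝ)
    (h12 : a1 - a2 ≠ 0) (h13 : a1 - a3 ≠ 0) (h23 : a2 - a3 ≠ 0) :
    (a1 - r) / ((a1 - a2) * (a1 - a3)) + (a2 - r) / ((a2 - a1) * (a2 - a3))
      + (a3 - r) / ((a3 - a1) * (a3 - a2)) = 0 := by
  have h21 : a2 - a1 ≠ 0 := by intro h; apply h12; linarith
  have h31 : a3 - a1 ≠ 0 := by intro h; apply h13; linarith
  have h32 : a3 - a2 ≠ 0 := by intro h; apply h23; linarith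
  field_simp
  ring

set_option maxHeartbeats 2000000 in
theorem linear_element_elliptic_coordinates
    (a1 a2 a3 : ℝ) (h12 : a1 > a2) (h23 : a2 > a3)
    (e1 e2 e3 : ℝ) (he1 : e1 = 1 ∨ e1 = -1) (he2 : e2 = 1 ∨ e2 = -1)
    (he3 : e3 = 1 ∨ e3 = -1)
    (u1 u2 u3 : ℝ → ℝ)
    (hreg : ∀ s, a1 > u1 s ∧ u1 s > a2 ∧ a2 > u2 s ∧ u2 s > a3 ∧ a3 > u3 s)
    (t : ℝ)
    (hd1 : DifferentiableAt ℝ u1 t) (hd2 : DifferentiableAt ℝ u2 t)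
    (hd3 : DifferentiableAt ℝ u3 t)
    (x1 x2 x3 : ℝ → ℝ)
    (hx1 : ∀ s, x1 s =
      e1 * Real.sqrt (((a1 - u1 s) * (a1 - u2 s) * (a1 - u3 s)) / ((a1 - a2) * (a1 - a3))))
    (hx2 : ∀ s, x2 s =
      e2 * Real.sqrt (((a2 - u1 s) * (a2 - u2 s) * (a2 - u3 s)) / ((a2 - a1) * (a2 - a3))))
    (hx3 : ∀ s, x3 s =
      e3 * Real.sqrt (((a3 - u1 s) * (a3 - u2 s) * (a3 - u3 s)) / ((a3 - a1) * (a3 - a2)))) :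
    (deriv x1 t) ^ 2 + (deriv x2 t) ^ 2 + (deriv x3 t) ^ 2 =
      ((u1 t - u2 t) * (u1 t - u3 t)) /
          (4 * ((a1 - u1 t) * (a2 - u1 t) * (a3 - u1 t))) * (deriv u1 t) ^ 2 +
        ((u2 t - u1 t) * (u2 t - u3 t)) /
          (4 * ((a1 - u2 t) * (a2 - u2 t) * (a3 - u2 t))) * (deriv u2 t) ^ 2 +
        ((u3 t - u1 t) * (u3 t - u2 t)) /
          (4 * ((a1 - u3 t) * (a2 - u3 t) * (a3 - u3 t))) * (deriv u3 t) ^ 2 := by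
  obtain ⟨r1, r2, r3, r4, r5⟩ := hreg t
  have h13 : a1 > a3 := lt_trans h23 h12
  -- strict sign facts
  have p11 : 0 < a1 - u1 t := sub_pos.mpr r1
  have p12 : 0 < a1 - u2 t := sub_pos.mpr (lt_trans r3 h12)
  have p13 : 0 < a1 - u3 t := sub_pos.mpr (lt_trans r5 h13)
  have n21 : a2 - u1 t < 0 := sub_neg.mpr r2
  have p22 : 0 < a2 - u2 t := sub_pos.mpr r3
  have p23 : 0 < a2 - u3 t := sub_pos.mpr (lt_trans r5 h23)
  have n31 : a3 - u1 t < 0 := sub_neg.mpr (r4.trans (r3.trans r2))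
  have n32 : a3 - u2 t < 0 := sub_neg.mpr r4
  have p33 : 0 < a3 - u3 t := sub_pos.mpr r5
  have c1ne : (a1 - a2) * (a1 - a3) ≠ 0 :=
    mul_ne_zero (sub_ne_zero.mpr (ne_of_gt h12)) (sub_ne_zero.mpr (ne_of_gt h13))
  have c2ne : (a2 - a1) * (a2 - a3) ≠ 0 :=
    mul_ne_zero (sub_ne_zero.mpr (ne_of_lt h12)) (sub_ne_zero.mpr (ne_of_gt h23))
  have c3ne : (a3 - a1) * (a3 - a2) ≠ 0 :=
    mul_ne_zero (sub_ne_zero.mpr (ne_of_lt h13)) (sub_ne_zero.mpr (ne_of_lt h23))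
  have hpos1 : 0 < (a1 - u1 t) * (a1 - u2 t) * (a1 - u3 t) / ((a1 - a2) * (a1 - a3)) :=
    div_pos (by positivity) (mul_pos (sub_pos.mpr h12) (sub_pos.mpr h13))
  have hpos2 : 0 < (a2 - u1 t) * (a2 - u2 t) * (a2 - u3 t) / ((a2 - a1) * (a2 - a3)) :=
    div_pos_of_neg_of_neg
      (mul_neg_of_neg_of_pos (mul_neg_of_neg_of_pos n21 p22) p23)
      (mul_neg_of_neg_of_pos (sub_neg.mpr h12) (sub_pos.mpr h23))
  have hpos3 : 0 < (a3 - u1 t) * (a3 - u2 t) * (a3 - u3 t) / ((a3 - a1) * (a3 - a2)) :=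
    div_pos (mul_pos (mul_pos_of_neg_of_neg n31 n32) p33)
      (mul_pos_of_neg_of_neg (sub_neg.mpr h13) (sub_neg.mpr h23))
  have k1 := elliptic_aux a1 ((a1 - a2) * (a1 - a3)) e1 c1ne he1 u1 u2 u3
    (deriv u1 t) (deriv u2 t) (deriv u3 t) t hd1.hasDerivAt hd2.hasDerivAt hd3.hasDerivAt
    hpos1 x1 hx1
  have k2 := elliptic_aux a2 ((a2 - a1) * (a2 - a3)) e2 c2ne he2 u1 u2 u3
    (deriv u1 t) (deriv u2 t) (deriv u3 t) t hd1.hasDerivAt hd2.hasDerivAt hd3.hasDerivAt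
    hpos2 x2 hx2
  have k3 := elliptic_aux a3 ((a3 - a1) * (a3 - a2)) e3 c3ne he3 u1 u2 u3
    (deriv u1 t) (deriv u2 t) (deriv u3 t) t hd1.hasDerivAt hd2.hasDerivAt hd3.hasDerivAt
    hpos3 x3 hx3
  rw [k1, k2, k3]
  have q11 : a1 - u1 t ≠ 0 := ne_of_gt p11
  have q12 : a1 - u2 t ≠ 0 := ne_of_gt p12
  have q13 : a1 - u3 t ≠ 0 := ne_of_gt p13
  have q21 : a2 - u1 t ≠ 0 := ne_of_lt n21
  have q22 : a2 - u2 t ≠ 0 := ne_of_gt p22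
  have q23 : a2 - u3 t ≠ 0 := ne_of_gt p23
  have q31 : a3 - u1 t ≠ 0 := ne_of_lt n31
  have q32 : a3 - u2 t ≠ 0 := ne_of_lt n32
  have q33 : a3 - u3 t ≠ 0 := ne_of_gt p33
  have qa12 : a1 - a2 ≠ 0 := sub_ne_zero.mpr (ne_of_gt h12)
  have qa13 : a1 - a3 ≠ 0 := sub_ne_zero.mpr (ne_of_gt h13)
  have qa23 : a2 - a3 ≠ 0 := sub_ne_zero.mpr (ne_of_gt h23)
  have qa21 : a2 - a1 ≠ 0 := sub_ne_zero.mpr (ne_of_lt h12)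
  have qa31 : a3 - a1 ≠ 0 := sub_ne_zero.mpr (ne_of_lt h13)
  have qa32 : a3 - a2 ≠ 0 := sub_ne_zero.mpr (ne_of_lt h23)
  rw [elliptic_expand _ _ _ _ _ _ _ c1ne q11 q12 q13,
    elliptic_expand _ _ _ _ _ _ _ c2ne q21 q22 q23,
    elliptic_expand _ _ _ _ _ _ _ c3ne q31 q32 q33]
  rw [elliptic_quarter _ _ _ (mul_ne_zero (mul_ne_zero q11 q21) q31),
    elliptic_quarter _ _ _ (mul_ne_zero (mul_ne_zero q12 q22) q32),
    elliptic_quarter _ _ _ (mul_ne_zero (mul_ne_zero q13 q23) q33)]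
  have L1 := elliptic_lag a1 a2 a3 (u1 t) (u2 t) (u3 t) qa12 qa13 qa23 q11 q21 q31
  have L2 := elliptic_lag a1 a2 a3 (u2 t) (u1 t) (u3 t) qa12 qa13 qa23 q12 q22 q32
  have L3 := elliptic_lag a1 a2 a3 (u3 t) (u1 t) (u2 t) qa12 qa13 qa23 q13 q23 q33
  have C1 := elliptic_cross a1 a2 a3 (u1 t) qa12 qa13 qa23
  have C2 := elliptic_cross a1 a2 a3 (u2 t) qa12 qa13 qa23
  have C3 := elliptic_cross a1 a2 a3 (u3 t) qa12 qa13 qa23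
  linear_combination (deriv u1 t ^ 2 / 4) * L1 + (deriv u2 t ^ 2 / 4) * L2
    + (deriv u3 t ^ 2 / 4) * L3 + (deriv u1 t * deriv u2 t / 2) * C3
    + (deriv u1 t * deriv u3 t / 2) * C2 + (deriv u2 t * deriv u3 t / 2) * C1
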